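/- Let ρ, σ be density matrices on ℂ^d with σ positive definite. If U₀ is a unitary at which U ↦ S(UρU*‖σ) := −S(ρ) − Tr(UρU* log σ) attains a local extremum on the unitary group, then U₀ρU₀* commutes with σ. -/

import Mathlib

open Matrix ComplexOrder

/-- Classical relative entropy with convention `0 * log 0 = 0` (automatic since
`Real.log 0 = 0`). -/
noncomputable def relEnt {d : ℕ} (p q : Fin d → ℝ) : ℝ :=
  ∑ i, p i * (Real.log (p i) - Real.log (q i))

/-- Non-decreasing rearrangement `p↑`. -/
noncomputable def sortAsc {d : ℕ} (p : Fin d → ℝ) : Fin d → ℝ :=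
  p ∘ Tuple.sort p

/-- Non-increasing rearrangement `p↓`. -/
noncomputable def sortDesc {d : ℕ} (p : Fin d → ℝ) : Fin d → ℝ :=
  (p ∘ Tuple.sort p) ∘ Fin.rev
/-- Matrix logarithm of a Hermitian matrix via its spectral decomposition
(junk value `0` on non-Hermitian matrices). -/
noncomputable def matLog {n : Type*} [Fintype n] [DecidableEq n]
    (A : Matrix n n ℂ) : Matrix n n ℂ :=
  if h : A.IsHermitian then
    (h.eigenvectorUnitary : Matrix n n ℂ) *
      Matrix.diagonal (fun i => (Real.log (h.eigenvalues i) : ℂ)) *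
      (star h.eigenvectorUnitary : Matrix n n ℂ)
  else 0

/-- Eigenvalue vector of a Hermitian matrix (junk value `0` otherwise). -/
noncomputable def evals {n : Type*} [Fintype n] [DecidableEq n]
    (A : Matrix n n ℂ) : n → ℝ :=
  if h : A.IsHermitian then h.eigenvalues else 0

/-- Quantum relative entropy `S(ρ‖σ) = Tr (ρ (log ρ − log σ))`. -/
noncomputable def qRelEnt {n : Type*} [Fintype n] [DecidableEq n]
    (ρ σ : Matrix n n ℂ) : ℝ :=
  ((ρ * (matLog ρ - matLog σ)).trace).re

/-- von Neumann entropy `S(ρ) = −Tr (ρ log ρ)`. -/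
noncomputable def vnEnt {n : Type*} [Fintype n] [DecidableEq n]
    (ρ : Matrix n n ℂ) : ℝ :=
  -((ρ * matLog ρ).trace).re

/-- Partial trace over the second (B) factor. -/
noncomputable def ptraceB {a b : ℕ}
    (ρ : Matrix (Fin a × Fin b) (Fin a × Fin b) ℂ) : Matrix (Fin a) (Fin a) ℂ :=
  fun i j => ∑ k, ρ (i, k) (j, k)

/-- Partial trace over the first (A) factor. -/
noncomputable def ptraceA {a b : ℕ}
    (ρ : Matrix (Fin a × Fin b) (Fin a × Fin b) ℂ) : Matrix (Fin b) (Fin b) ℂ :=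
  fun i j => ∑ k, ρ (k, i) (k, j)

/-- Eigenvalues of a matrix on a bipartite space, reindexed by `Fin (a*b)`. -/
noncomputable def evalsP {a b : ℕ}
    (ρ : Matrix (Fin a × Fin b) (Fin a × Fin b) ℂ) : Fin (a * b) → ℝ :=
  evals ρ ∘ finProdFinEquiv.symm


section AuxEntropy
open NormedSpace
attribute [local instance] Matrix.linftyOpNormedRing Matrix.linftyOpNormedAlgebra

noncomputable def phiRe (d : ℕ) : Matrix (Fin d) (Fin d) ℂ →L[ℝ] ℝ :=
  Complex.reCLM.comp
    (LinearMap.toContinuousLinearMap ((Matrix.traceLinearMap (Fin d) ℂ ℂ).restrictScalars ℝ))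

lemma phiRe_apply {d : ℕ} (M : Matrix (Fin d) (Fin d) ℂ) : phiRe d M = (M.trace).re := by
  simp [phiRe]

lemma derivAux {d : ℕ} (K B L : Matrix (Fin d) (Fin d) ℂ) :
    HasDerivAt (fun t : ℝ => (((exp (t • K)) * B * (exp (t • (-K))) * L).trace).re)
      ((((K * B - B * K) * L).trace).re) 0 := by
  have h1 : HasDerivAt (fun t : ℝ => exp (t • K)) K 0 := by
    have := hasDerivAt_exp_smul_const' (𝕂 := ℝ) K 0
    simp only [zero_smul, exp_zero, mul_one] at this
    exact this
  have h2 : HasDerivAt (fun t : ℝ => exp (t • (-K))) (-K) 0 := by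
    have := hasDerivAt_exp_smul_const' (𝕂 := ℝ) (-K) 0
    simp only [zero_smul, exp_zero, mul_one] at this
    exact this
  have h3 := ((h1.mul_const B).mul h2).mul_const L
  have h4 := (phiRe d).hasFDerivAt.comp_hasDerivAt 0 h3
  simp only [Function.comp_def, phiRe_apply] at h4
  refine h4.congr_deriv ?_
  show (((K * B * exp (0 • -K) + exp (0 • K) * B * -K) * L).trace).re = _
  simp [Matrix.trace_sub, Matrix.sub_mul, Matrix.add_mul, mul_one, one_mul,
      sub_eq_add_neg, Matrix.neg_mul, Matrix.mul_neg]

lemma expCurve_continuousAt {d : ℕ} (K U₀ : Matrix (Fin d) (Fin d) ℂ) :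
    ContinuousAt (fun t : ℝ => exp (t • K) * U₀) 0 := by
  exact ((hasDerivAt_exp_smul_const' (𝕂 := ℝ) K 0).mul_const U₀).continuousAt

lemma exp_neg_mul_exp {d : ℕ} (A : Matrix (Fin d) (Fin d) ℂ) :
    exp (-A) * exp A = 1 := by
  rw [← Matrix.exp_add_of_commute _ _ ((Commute.refl A).neg_left), neg_add_cancel, exp_zero]

lemma exp_skew_conjTranspose {d : ℕ} {K : Matrix (Fin d) (Fin d) ℂ} (hK : Kᴴ = -K) (t : ℝ) :
    (exp (t • K))ᴴ = exp (t • (-K)) := by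
  rw [← Matrix.exp_conjTranspose, Matrix.conjTranspose_smul, hK, star_trivial]

end AuxEntropy

lemma commute_of_commute_matLog {d : ℕ} {σ A : Matrix (Fin d) (Fin d) ℂ} (hσ : σ.PosDef)
    (h : A * matLog σ = matLog σ * A) : A * σ = σ * A := by
  classical
  set u : Matrix (Fin d) (Fin d) ℂ := (hσ.1.eigenvectorUnitary : Matrix (Fin d) (Fin d) ℂ)
    with hu_def
  have huu : star u * u = 1 := Matrix.mem_unitaryGroup_iff'.mp (hσ.1.eigenvectorUnitary).2
  have huu' : u * star u = 1 := Matrix.mem_unitaryGroup_iff.mp (hσ.1.eigenvectorUnitary).2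
  have hcl : ∀ X : Matrix (Fin d) (Fin d) ℂ, star u * (u * X) = X := by
    intro X; rw [← Matrix.mul_assoc, huu, Matrix.one_mul]
  have hcl' : ∀ X : Matrix (Fin d) (Fin d) ℂ, u * (star u * X) = X := by
    intro X; rw [← Matrix.mul_assoc, huu', Matrix.one_mul]
  set lv : Fin d → ℂ := fun i => (Real.log (hσ.1.eigenvalues i) : ℂ) with hlv
  set ev : Fin d → ℂ := fun i => (hσ.1.eigenvalues i : ℂ) with hev
  have hL : matLog σ = u * Matrix.diagonal lv * star u := by
    rw [matLog, dif_pos hσ.1]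
  set P : Matrix (Fin d) (Fin d) ℂ := star u * A * u with hP
  have hPD : P * Matrix.diagonal lv = Matrix.diagonal lv * P := by
    have h1 := congrArg (fun M => star u * M * u) h
    simp only [hL] at h1
    calc P * Matrix.diagonal lv
        = star u * (A * (u * Matrix.diagonal lv * star u)) * u := by
          simp only [hP, Matrix.mul_assoc, huu, Matrix.mul_one]
      _ = star u * (u * Matrix.diagonal lv * star u * A) * u := by rw [h1]
      _ = Matrix.diagonal lv * P := by
          simp only [hP, Matrix.mul_assoc, hcl]
  have hPE : P * Matrix.diagonal ev = Matrix.diagonal ev * P := by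
    ext i j
    rw [Matrix.mul_diagonal, Matrix.diagonal_mul]
    rcases eq_or_ne (hσ.1.eigenvalues i) (hσ.1.eigenvalues j) with hij | hij
    · rw [hev]; simp only [hij]; ring
    · have hP0 : P i j = 0 := by
        have := congrFun (congrFun hPD i) j
        rw [Matrix.mul_diagonal, Matrix.diagonal_mul] at this
        have hlog : Real.log (hσ.1.eigenvalues i) ≠ Real.log (hσ.1.eigenvalues j) := by
          intro hcon
          exact hij (Real.log_injOn_pos (Set.mem_Ioi.mpr (hσ.eigenvalues_pos i))
            (Set.mem_Ioi.mpr (hσ.eigenvalues_pos j)) hcon)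
        have hlv_ne : lv j ≠ lv i := by
          rw [hlv]
          simp only [ne_eq, Complex.ofReal_inj]
          exact fun hc => hlog hc.symm
        have h2 : P i j * (lv j - lv i) = 0 := by linear_combination this
        rcases mul_eq_zero.mp h2 with h0 | h0
        · exact h0
        · exact absurd (sub_eq_zero.mp h0) hlv_ne
      rw [hP0]; ring
  have hσeq : σ = u * Matrix.diagonal ev * star u := by
    have := hσ.1.spectral_theorem
    rw [Unitary.conjStarAlgAut_apply] at this
    exact this
  have hA : A = u * P * star u := by
    rw [hP]
    simp only [Matrix.mul_assoc, huu', Matrix.mul_one, hcl']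
  calc A * σ = (u * P * star u) * (u * Matrix.diagonal ev * star u) := by rw [← hA, ← hσeq]
    _ = u * (P * Matrix.diagonal ev) * star u := by
        simp only [Matrix.mul_assoc, hcl]
    _ = u * (Matrix.diagonal ev * P) * star u := by rw [hPE]
    _ = (u * Matrix.diagonal ev * star u) * (u * P * star u) := by
        simp only [Matrix.mul_assoc, hcl]
    _ = σ * A := by rw [← hA, ← hσeq]

theorem stmt_5 {d : ℕ} (ρ σ : Matrix (Fin d) (Fin d) ℂ)
    (hρ : ρ.PosSemidef) (hρ1 : ρ.trace = 1)
    (hσ : σ.PosDef) (hσ1 : σ.trace = 1)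
    (U₀ : Matrix (Fin d) (Fin d) ℂ) (hU₀ : U₀ ∈ Matrix.unitaryGroup (Fin d) ℂ)
    (hext : IsLocalExtrOn
      (fun U : Matrix (Fin d) (Fin d) ℂ =>
        -(vnEnt ρ) - ((U * ρ * Uᴴ * matLog σ).trace).re)
      (Matrix.unitaryGroup (Fin d) ℂ : Set (Matrix (Fin d) (Fin d) ℂ)) U₀) :
    (U₀ * ρ * U₀ᴴ) * σ = σ * (U₀ * ρ * U₀ᴴ) := by
  classical
  set L := matLog σ with hLdef
  set ρ' := U₀ * ρ * U₀ᴴ with hρ'def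
  have hLh : Lᴴ = L := by
    rw [hLdef, matLog, dif_pos hσ.1]
    have hD : (Matrix.diagonal fun i => (Real.log (hσ.1.eigenvalues i) : ℂ))ᴴ
        = Matrix.diagonal fun i => (Real.log (hσ.1.eigenvalues i) : ℂ) := by
      rw [Matrix.diagonal_conjTranspose]
      ext i j
      rcases eq_or_ne i j with h | h
      · subst h; simp [Matrix.diagonal_apply_eq, Pi.star_apply, Complex.conj_ofReal]
      · simp [Matrix.diagonal_apply_ne _ h]
    have hHerm : (Matrix.diagonal fun i => (Real.log (hσ.1.eigenvalues i) : ℂ)).IsHermitian := hD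
    have := Matrix.isHermitian_mul_mul_conjTranspose
      (hσ.1.eigenvectorUnitary : Matrix (Fin d) (Fin d) ℂ) hHerm
    exact this
  have hρ'h : ρ'ᴴ = ρ' := by
    rw [hρ'def]
    simp [Matrix.conjTranspose_mul, hρ.1.eq, Matrix.mul_assoc]
  set K := ρ' * L - L * ρ' with hKdef
  have hKskew : Kᴴ = -K := by
    rw [hKdef]
    simp [Matrix.conjTranspose_sub, Matrix.conjTranspose_mul, hLh, hρ'h]
  set c : ℝ → Matrix (Fin d) (Fin d) ℂ := fun t => NormedSpace.exp (t • K) * U₀ with hcdef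
  have hc0 : c 0 = U₀ := by simp [hcdef, NormedSpace.exp_zero]
  have hmem : ∀ t, c t ∈ Matrix.unitaryGroup (Fin d) ℂ := by
    intro t
    rw [Matrix.mem_unitaryGroup_iff']
    have : star (c t) = U₀ᴴ * NormedSpace.exp (-(t • K)) := by
      rw [hcdef]
      show (NormedSpace.exp (t • K) * U₀)ᴴ = _
      rw [Matrix.conjTranspose_mul, exp_skew_conjTranspose hKskew, smul_neg]
    rw [this, hcdef]
    calc U₀ᴴ * NormedSpace.exp (-(t • K)) * (NormedSpace.exp (t • K) * U₀)
        = U₀ᴴ * (NormedSpace.exp (-(t • K)) * NormedSpace.exp (t • K)) * U₀ := by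
          rw [Matrix.mul_assoc, Matrix.mul_assoc, Matrix.mul_assoc]
      _ = U₀ᴴ * U₀ := by rw [exp_neg_mul_exp]; rw [Matrix.mul_one]
      _ = 1 := Matrix.mem_unitaryGroup_iff'.mp hU₀
  -- extremum transferred
  have htend : Filter.Tendsto c (nhds 0) (nhdsWithin U₀ (Matrix.unitaryGroup (Fin d) ℂ)) := by
    rw [tendsto_nhdsWithin_iff]
    constructor
    · have h := (expCurve_continuousAt K U₀).tendsto
      simpa [NormedSpace.exp_zero] using h
    · exact Filter.Eventually.of_forall hmem
  have hext' : IsLocalExtr ((fun U : Matrix (Fin d) (Fin d) ℂ =>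
        -(vnEnt ρ) - ((U * ρ * Uᴴ * L).trace).re) ∘ c) 0 := by
    have hext2 := hc0.symm ▸ hext
    have htend2 := hc0.symm ▸ htend
    exact IsExtrFilter.comp_tendsto hext2 htend2
  -- rewrite composed function
  have hfc : ((fun U : Matrix (Fin d) (Fin d) ℂ =>
        -(vnEnt ρ) - ((U * ρ * Uᴴ * L).trace).re) ∘ c)
      = fun t : ℝ => -(vnEnt ρ) - (((NormedSpace.exp (t • K)) * ρ' * (NormedSpace.exp (t • (-K))) * L).trace).re := by
    funext t
    simp only [Function.comp_apply, hcdef]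
    congr 2
    rw [Matrix.conjTranspose_mul, exp_skew_conjTranspose hKskew, hρ'def]
    noncomm_ring
  have hderiv : HasDerivAt ((fun U : Matrix (Fin d) (Fin d) ℂ =>
        -(vnEnt ρ) - ((U * ρ * Uᴴ * L).trace).re) ∘ c)
      (-((((K * ρ' - ρ' * K) * L).trace).re)) 0 := by
    rw [hfc]
    exact (derivAux K ρ' L).const_sub (-(vnEnt ρ))
  have hzero : (((K * ρ' - ρ' * K) * L).trace).re = 0 := by
    have := hext'.hasDerivAt_eq_zero hderiv
    linarith [this]
  -- algebra: the trace equals trace (K * K)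
  have htr : ((K * ρ' - ρ' * K) * L).trace = (K * K).trace := by
    rw [Matrix.sub_mul, Matrix.trace_sub]
    rw [← Matrix.trace_mul_cycle K L ρ',
        show K * ρ' * L = K * (ρ' * L) from by rw [Matrix.mul_assoc],
        show K * L * ρ' = K * (L * ρ') from by rw [Matrix.mul_assoc],
        ← Matrix.trace_sub, ← Matrix.mul_sub, ← hKdef]
  have hKK : ((K * K).trace).re = 0 := by rw [← htr]; exact hzero
  -- K * K = -(K * Kᴴ)
  have hKKH : K * K = -(K * Kᴴ) := by rw [hKskew]; simp [Matrix.mul_neg]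
  have hsum : ∑ i, ∑ j, Complex.normSq (K i j) = 0 := by
    have h1 : ((K * Kᴴ).trace).re = ∑ i, ∑ j, Complex.normSq (K i j) := by
      simp only [Matrix.trace, Matrix.diag, Matrix.mul_apply, Matrix.conjTranspose_apply]
      rw [Complex.re_sum]
      congr 1; funext i
      rw [Complex.re_sum]
      congr 1; funext j
      rw [show star (K i j) = (starRingEnd ℂ) (K i j) from rfl, Complex.mul_conj]
      simp
    have h2 : ((K * K).trace).re = -(((K * Kᴴ).trace).re) := by
      rw [hKKH]; simp
    rw [← h1, ← neg_eq_zero, ← h2, hKK]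
  have hK0 : K = 0 := by
    ext i j
    have hnonneg : ∀ i ∈ Finset.univ, (0:ℝ) ≤ ∑ j, Complex.normSq (K i j) :=
      fun i _ => Finset.sum_nonneg fun j _ => Complex.normSq_nonneg _
    have := (Finset.sum_eq_zero_iff_of_nonneg hnonneg).mp hsum i (Finset.mem_univ i)
    have := (Finset.sum_eq_zero_iff_of_nonneg (fun j _ => Complex.normSq_nonneg _)).mp this j
      (Finset.mem_univ j)
    simpa using Complex.normSq_eq_zero.mp this
  have hcomm : ρ' * L = L * ρ' := sub_eq_zero.mp (hKdef ▸ hK0)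
  exact commute_of_commute_matLog hσ hcomm
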